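/- arXiv:2106.13826 — 2 statements merged into one kernel-verified Lean document; each statement's English description precedes it below -/
import Mathlib

section
/- Let ρ = l → r be a linear term rewrite rule and s a linear term. If the rule encoding ρ° is applied at position p in the term encoding s° and this gives rise to PBPO+ rewrite steps s° ⇒_{ρ°} G and s° ⇒_{ρ°} G' (both at position p), then G and G' are isomorphic. -/
open CategoryTheory
open Classical

noncomputable section

/-- Labeled graphs over a label type `W`. -/
structure LGraph (W : Type) : Type 1 where
  V : Type
  E : Type
  src : E → V
  tgt : E → V
  lV : V → W
  lE : E → W

section Cat

variable {W : Type} [Preorder W]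

/-- Label-nondecreasing graph premorphisms: the morphisms of the category `Graph^(L,≤)`. -/
structure GLHom (G H : LGraph W) : Type where
  onV : G.V → H.V
  onE : G.E → H.E
  src_comm : ∀ e, H.src (onE e) = onV (G.src e)
  tgt_comm : ∀ e, H.tgt (onE e) = onV (G.tgt e)
  lV_le : ∀ v, G.lV v ≤ H.lV (onV v)
  lE_le : ∀ e, G.lE e ≤ H.lE (onE e)

theorem GLHom.ext' {G H : LGraph W} {f g : GLHom G H}
    (h1 : f.onV = g.onV) (h2 : f.onE = g.onE) : f = g := by
  cases f; cases g
  cases h1; cases h2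
  rfl

/-- The category `Graph^(L,≤)` of labeled graphs over a preordered label set. -/
instance : Category (LGraph W) where
  Hom G H := GLHom G H
  id G := { onV := id, onE := id, src_comm := fun _ => rfl, tgt_comm := fun _ => rfl,
            lV_le := fun _ => le_refl _, lE_le := fun _ => le_refl _ }
  comp f g :=
    { onV := g.onV ∘ f.onV
      onE := g.onE ∘ f.onE
      src_comm := fun e => by
        simp only [Function.comp_apply, g.src_comm, f.src_comm]
      tgt_comm := fun e => by
        simp only [Function.comp_apply, g.tgt_comm, f.tgt_comm]
      lV_le := fun v => le_trans (f.lV_le v) (g.lV_le _)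
      lE_le := fun e => le_trans (f.lE_le e) (g.lE_le _) }
  id_comp f := GLHom.ext' rfl rfl
  comp_id f := GLHom.ext' rfl rfl
  assoc f g h := GLHom.ext' rfl rfl

/-- Vertex map of a morphism. -/
abbrev homV {G H : LGraph W} (f : G ⟶ H) : G.V → H.V := GLHom.onV f

/-- Edge map of a morphism. -/
abbrev homE {G H : LGraph W} (f : G ⟶ H) : G.E → H.E := GLHom.onE f

end Cat

/-- A graph is finite if it has finitely many vertices and edges. -/
def FiniteG {W : Type} (G : LGraph W) : Prop := Finite G.V ∧ Finite G.E
/-- The flat lattice on a base label set `A`: a global minimum `⊥`, a global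
maximum `⊤`, and all elements of `A` pairwise incomparable. -/
inductive Flat (A : Type) : Type
  | bot : Flat A
  | el : A → Flat A
  | top : Flat A

namespace Flat

def le {A : Type} : Flat A → Flat A → Prop
  | bot, _ => True
  | _, top => True
  | el a, el b => a = b
  | _, _ => False

instance (A : Type) : Preorder (Flat A) where
  le := Flat.le
  le_refl a := by cases a <;> trivial
  le_trans a b c hab hbc := by
    cases a <;> cases b <;> cases c <;> simp_all [Flat.le]

theorem bot_le {A : Type} (a : Flat A) : (Flat.bot : Flat A) ≤ a := by
  show Flat.le Flat.bot a
  cases a <;> trivial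

theorem le_top {A : Type} (a : Flat A) : a ≤ (Flat.top : Flat A) := by
  show Flat.le a Flat.top
  cases a <;> trivial

theorem le_cases {A : Type} {a b : Flat A} (h : a = Flat.bot ∨ b = Flat.top) : a ≤ b := by
  rcases h with h | h
  · subst h; exact bot_le _
  · subst h; exact le_top _

end Flat

/-- The flat lattice `Σ°` induced by a signature `S` together with the
positive natural numbers (used as edge labels). -/
abbrev FlatL (S : Type) := Flat (S ⊕ ℕ+)
/-- First-order terms over a signature `S` with arity function `ar` and
variable set `X`. -/
inductive Term (S : Type) (ar : S → ℕ) (X : Type) : Type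
  | var : X → Term S ar X
  | app : (f : S) → (Fin (ar f) → Term S ar X) → Term S ar X

namespace Term

variable {S : Type} {ar : S → ℕ} {X : Type}

/-- The subterm of `t` at a position (a list of (0-based) child indices),
if the position exists in `t`. -/
def sub? : Term S ar X → List ℕ → Option (Term S ar X)
  | t, [] => some t
  | .var _, _ :: _ => none
  | .app f ts, i :: p => if h : i < ar f then sub? (ts ⟨i, h⟩) p else none

/-- The set of variables occurring in a term. -/
def vars (t : Term S ar X) : Set X := {x | ∃ p, t.sub? p = some (.var x)}

/-- A term is linear if every variable occurs at most once in it. -/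
def Linear (t : Term S ar X) : Prop :=
  ∀ x p q, t.sub? p = some (.var x) → t.sub? q = some (.var x) → p = q

/-- The head symbol of a term, if any. -/
def head? : Term S ar X → Option S
  | .var _ => none
  | .app f _ => some f

/-- The function symbol at position `p` of `t`, if any. -/
def symAt (t : Term S ar X) (p : List ℕ) : Option S := (t.sub? p).bind head?

theorem sub?_append (t : Term S ar X) (p q : List ℕ) :
    t.sub? (p ++ q) = (t.sub? p).bind (fun s => s.sub? q) := by
  induction p generalizing t with
  | nil => simp [sub?]
  | cons i p ih =>
    cases t with
    | var x => simp [sub?]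
    | app f ts =>
      show sub? (.app f ts) (i :: (p ++ q)) = _
      simp only [sub?]
      by_cases h : i < ar f
      · simp [h, ih]
      · simp [h]

theorem symAt_sub (t : Term S ar X) {p : List ℕ} {f : S} (h : t.symAt p = some f) :
    ∃ ts : Fin (ar f) → Term S ar X, t.sub? p = some (.app f ts) := by
  unfold symAt at h
  cases hs : t.sub? p with
  | none => rw [hs] at h; simp at h
  | some s =>
    rw [hs] at h
    cases s with
    | var x => simp [head?] at h
    | app g ts =>
      simp [head?] at h
      subst h
      exact ⟨ts, rfl⟩

theorem edge_sub?_isSome (t : Term S ar X) {p : List ℕ} {i : ℕ}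
    (h : ∃ f, t.symAt p = some f ∧ i < ar f) :
    ∃ s, t.sub? (p ++ [i]) = some s := by
  obtain ⟨f, hf, hi⟩ := h
  obtain ⟨ts, hts⟩ := t.symAt_sub hf
  refine ⟨ts ⟨i, hi⟩, ?_⟩
  rw [sub?_append, hts]
  simp [sub?, hi]

theorem edge_tgt_var (t : Term S ar X) {p : List ℕ} {i : ℕ}
    (h : ∃ f, t.symAt p = some f ∧ i < ar f)
    (hn : ¬ (t.symAt (p ++ [i])).isSome) :
    ∃ x, t.sub? (p ++ [i]) = some (.var x) := by
  obtain ⟨s, hs⟩ := t.edge_sub?_isSome h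
  cases s with
  | var x => exact ⟨x, hs⟩
  | app g ts => exact absurd (by simp [symAt, hs, head?]) hn

theorem root_var (t : Term S ar X) (h : ¬ (t.symAt []).isSome) :
    ∃ x, t.sub? [] = some (.var x) := by
  cases t with
  | var x => exact ⟨x, rfl⟩
  | app f ts => exact absurd (by simp [symAt, sub?, head?]) h

/-- Vertices of the term encoding: symbol vertices (named by their position)
and variable heads (named by their variable). -/
def encV (t : Term S ar X) : Type :=
  {p : List ℕ // (t.symAt p).isSome} ⊕ {x : X // x ∈ t.vars}

/-- Edges of the term encoding: pairs of a symbol position and a child index. -/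
def encE (t : Term S ar X) : Type :=
  {pi : List ℕ × ℕ // ∃ f, t.symAt pi.1 = some f ∧ pi.2 < ar f}

/-- Target of an edge of the term encoding. -/
noncomputable def encTgt (t : Term S ar X) (e : t.encE) : t.encV :=
  if h : (t.symAt (e.1.1 ++ [e.1.2])).isSome then Sum.inl ⟨e.1.1 ++ [e.1.2], h⟩
  else Sum.inr ⟨Classical.choose (t.edge_tgt_var e.2 h),
    ⟨e.1.1 ++ [e.1.2], Classical.choose_spec (t.edge_tgt_var e.2 h)⟩⟩

/-- The term encoding `t°` of a term `t` as a `Σ°`-labeled graph. -/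
noncomputable def enc (t : Term S ar X) : LGraph (FlatL S) where
  V := t.encV
  E := t.encE
  src e := Sum.inl ⟨e.1.1, by obtain ⟨f, hf, _⟩ := e.2; simp [hf]⟩
  tgt := t.encTgt
  lV v := match v with
    | .inl q => (t.symAt q.1).elim Flat.bot (fun f => Flat.el (Sum.inl f))
    | .inr _ => Flat.bot
  lE e := Flat.el (Sum.inr ⟨e.1.2 + 1, Nat.succ_pos _⟩)

/-- The root of the term encoding (the vertex at position `ε`). -/
noncomputable def encRoot (t : Term S ar X) : t.encV :=
  if h : (t.symAt []).isSome then Sum.inl ⟨[], h⟩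
  else Sum.inr ⟨Classical.choose (t.root_var h), ⟨[], Classical.choose_spec (t.root_var h)⟩⟩

/-- `t.encVertAt p v` says that `v` is the vertex at position `p` in the term
encoding `t°`. -/
def encVertAt (t : Term S ar X) (p : List ℕ) : t.encV → Prop
  | .inl q => q.1 = p
  | .inr x => t.sub? p = some (.var x.1)

/-- The set of variable heads of a term encoding. -/
def varHeads (t : Term S ar X) : Set t.encV := Set.range Sum.inr

/-- Applying a substitution to a term. -/
def subst (σ : X → Term S ar X) : Term S ar X → Term S ar X
  | .var x => σ x
  | .app f ts => .app f (fun i => subst σ (ts i))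

end Term

/-- One-hole contexts over a signature. `app f i ts C` is the context
`f(ts 0, …, C, …, ts (n-1))` with `C` at argument position `i`. -/
inductive Ctx (S : Type) (ar : S → ℕ) (X : Type) : Type
  | hole : Ctx S ar X
  | app : (f : S) → (i : Fin (ar f)) → (Fin (ar f) → Term S ar X) → Ctx S ar X → Ctx S ar X

namespace Ctx

variable {S : Type} {ar : S → ℕ} {X : Type}

/-- Replacing the hole of a context by a term. -/
def fill : Ctx S ar X → Term S ar X → Term S ar X
  | .hole, t => t
  | .app f i ts C, t => .app f (Function.update ts i (C.fill t))

/-- The position of the hole of a context. -/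
def holePos : Ctx S ar X → List ℕ
  | .hole => []
  | .app _ i _ C => (i : ℕ) :: C.holePos

end Ctx

/-- A term rewrite rule `lhs → rhs`: `lhs` is not a variable and all variables
of `rhs` occur in `lhs`. -/
structure TRSRule (S : Type) (ar : S → ℕ) (X : Type) : Type where
  lhs : Term S ar X
  rhs : Term S ar X
  lhs_not_var : ∀ x, lhs ≠ Term.var x
  var_cond : rhs.vars ⊆ lhs.vars

namespace TRSRule

variable {S : Type} {ar : S → ℕ} {X : Type}

/-- A rule is linear if both sides are linear terms. -/
def Linear (ρ : TRSRule S ar X) : Prop := ρ.lhs.Linear ∧ ρ.rhs.Linear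

/-- The rewrite step relation generated by a single rule. -/
def Step (ρ : TRSRule S ar X) (s t : Term S ar X) : Prop :=
  ∃ (C : Ctx S ar X) (σ : X → Term S ar X),
    s = C.fill (ρ.lhs.subst σ) ∧ t = C.fill (ρ.rhs.subst σ)

/-- The rewrite step relation of a rule at a fixed position `p`. -/
def StepAt (ρ : TRSRule S ar X) (p : List ℕ) (s t : Term S ar X) : Prop :=
  ∃ (C : Ctx S ar X) (σ : X → Term S ar X),
    C.holePos = p ∧ s = C.fill (ρ.lhs.subst σ) ∧ t = C.fill (ρ.rhs.subst σ)

end TRSRule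

/-- The rewrite relation of a term rewriting system. -/
def TStep {S : Type} {ar : S → ℕ} {X : Type} (Rs : Set (TRSRule S ar X))
    (s t : Term S ar X) : Prop :=
  ∃ ρ ∈ Rs, ρ.Step s t
section Closures

variable {A : Type}

/-- Upper context closure `C[G]` of a graph rooted at `r`: adds a `⊤`-labeled
context vertex with a `⊤`-labeled edge to the root and a `⊤`-labeled loop. -/
def upperCC (G : LGraph (Flat A)) (r : G.V) : LGraph (Flat A) where
  V := G.V ⊕ Unit
  E := G.E ⊕ Bool
  src e := match e with
    | .inl e => .inl (G.src e)
    | .inr _ => .inr ()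
  tgt e := match e with
    | .inl e => .inl (G.tgt e)
    | .inr true => .inl r
    | .inr false => .inr ()
  lV v := match v with
    | .inl v => G.lV v
    | .inr _ => Flat.top
  lE e := match e with
    | .inl e => G.lE e
    | .inr _ => Flat.top

/-- Lower context closure `G↓_Xs`: relabels every vertex in `Xs` to `⊤` and
adds for it a fresh `⊤`-labeled vertex `x'` with a `⊤`-labeled edge `x → x'`
and a `⊤`-labeled loop on `x'`. -/
noncomputable def lowerCC (G : LGraph (Flat A)) (Xs : Set G.V) : LGraph (Flat A) where
  V := G.V ⊕ Xs
  E := G.E ⊕ (Xs ⊕ Xs)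
  src e := match e with
    | .inl e => .inl (G.src e)
    | .inr (.inl x) => .inl x.1
    | .inr (.inr x) => .inr x
  tgt e := match e with
    | .inl e => .inl (G.tgt e)
    | .inr (.inl x) => .inr x
    | .inr (.inr x) => .inr x
  lV v := match v with
    | .inl v => if v ∈ Xs then Flat.top else G.lV v
    | .inr _ => Flat.top
  lE e := match e with
    | .inl e => G.lE e
    | .inr _ => Flat.top

/-- The context closure `C[G↓_Xs]` of a rooted graph. -/
noncomputable def ctxCC (G : LGraph (Flat A)) (r : G.V) (Xs : Set G.V) : LGraph (Flat A) :=
  upperCC (lowerCC G Xs) (Sum.inl r)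

theorem ctxCC_lV_inl (G : LGraph (Flat A)) (r : G.V) (Xs : Set G.V) (v : G.V) :
    (ctxCC G r Xs).lV (Sum.inl (Sum.inl v)) = if v ∈ Xs then Flat.top else G.lV v := rfl

/-- The typing morphism `G ↣ C[G↓_Xs]` (an inclusion). -/
noncomputable def tCC (G : LGraph (Flat A)) (r : G.V) (Xs : Set G.V) :
    GLHom G (ctxCC G r Xs) where
  onV v := Sum.inl (Sum.inl v)
  onE e := Sum.inl (Sum.inl e)
  src_comm e := rfl
  tgt_comm e := rfl
  lV_le v := by
    rw [ctxCC_lV_inl]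
    split
    · exact Flat.le_top _
    · exact le_refl _
  lE_le e := le_refl _

end Closures

/-- The interface graph `I(t)` of a term `t`: a discrete graph with
`⊥`-labeled vertices `Var(t) ∪ {ε}`. -/
def interfaceG {S : Type} {ar : S → ℕ} {X : Type} (t : Term S ar X) : LGraph (FlatL S) where
  V := {x : X // x ∈ t.vars} ⊕ Unit
  E := Empty
  src e := e.elim
  tgt e := e.elim
  lV _ := Flat.bot
  lE e := e.elim

/-- The variable vertices of an interface graph. -/
def interfaceVars {S : Type} {ar : S → ℕ} {X : Type} (t : Term S ar X) :
    Set (interfaceG t).V := Set.range Sum.inl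
/-- A PBPO⁺ rewrite rule. -/
structure PBPORule (W : Type) [Preorder W] : Type 1 where
  L : LGraph W
  K : LGraph W
  R : LGraph W
  L' : LGraph W
  K' : LGraph W
  l : K ⟶ L
  r : K ⟶ R
  l' : K' ⟶ L'
  tL : L ⟶ L'
  tK : K ⟶ K'

/-- A PBPO⁺ rewrite step `G_L ⇒_ρ^α G_R`, consisting of a monic match `m`, an
adherence morphism `α` making the match square a pullback, the pullback `G_K`
of `α` along `l'`, and the pushout `G_R` of `r` along `u`. -/
structure RewriteStep {W : Type} [Preorder W] (ρ : PBPORule W) (G₀ G₁ : LGraph W) :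
    Type 1 where
  m : ρ.L ⟶ G₀
  mono_m : Mono m
  α : G₀ ⟶ ρ.L'
  matchPB : IsPullback (𝟙 ρ.L) m ρ.tL α
  GK : LGraph W
  gL : GK ⟶ G₀
  u' : GK ⟶ ρ.K'
  pbK : IsPullback gL u' α ρ.l'
  u : ρ.K ⟶ GK
  u_u' : u ≫ u' = ρ.tK
  u_gL : u ≫ gL = ρ.l ≫ m
  w : ρ.R ⟶ G₁
  gR : GK ⟶ G₁
  po : IsPushout ρ.r u w gR

/-- `G ⇒_ρ H` : there exists a PBPO⁺ rewrite step from `G` to `H` via `ρ`. -/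
def PBPOStep {W : Type} [Preorder W] (ρ : PBPORule W) (G H : LGraph W) : Prop :=
  Nonempty (RewriteStep ρ G H)

/-- A match `m` establishes a match (of the rule `ρ`) if it is monic and some
adherence morphism makes the match square a pullback. -/
def EstablishesMatch {W : Type} [Preorder W] (ρ : PBPORule W) {G : LGraph W}
    (m : ρ.L ⟶ G) : Prop :=
  Mono m ∧ ∃ α : G ⟶ ρ.L', m ≫ α = ρ.tL ∧ IsPullback (𝟙 ρ.L) m ρ.tL α

section RuleEnc

variable {S : Type} {ar : S → ℕ} {X : Type}

/-- The morphism `l : K → L` of the rule encoding. -/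
noncomputable def encKtoL (ρ : TRSRule S ar X) : GLHom (interfaceG ρ.rhs) ρ.lhs.enc where
  onV v := match v with
    | .inl x => Sum.inr ⟨x.1, ρ.var_cond x.2⟩
    | .inr _ => ρ.lhs.encRoot
  onE e := e.elim
  src_comm e := e.elim
  tgt_comm e := e.elim
  lV_le v := by cases v <;> exact Flat.bot_le _
  lE_le e := e.elim

/-- The morphism `r : K → R` of the rule encoding. -/
noncomputable def encKtoR (ρ : TRSRule S ar X) : GLHom (interfaceG ρ.rhs) ρ.rhs.enc where
  onV v := match v with
    | .inl x => Sum.inr x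
    | .inr _ => ρ.rhs.encRoot
  onE e := e.elim
  src_comm e := e.elim
  tgt_comm e := e.elim
  lV_le v := by cases v <;> exact Flat.bot_le _
  lE_le e := e.elim

/-- Mapping the primed (lower-closure) vertices of `K'` to those of `L'`. -/
noncomputable def mapPrime (ρ : TRSRule S ar X) :
    ↥(interfaceVars ρ.rhs) → ↥(ρ.lhs.varHeads) :=
  fun x' => match x' with
  | ⟨.inl x, _⟩ => ⟨Sum.inr ⟨x.1, ρ.var_cond x.2⟩, ⟨⟨x.1, ρ.var_cond x.2⟩, rfl⟩⟩
  | ⟨.inr u, h⟩ => absurd h (by rintro ⟨y, hy⟩; cases hy)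

/-- The morphism `l' : K' → L'` of the rule encoding. -/
noncomputable def encl' (ρ : TRSRule S ar X) :
    GLHom (ctxCC (interfaceG ρ.rhs) (Sum.inr ()) (interfaceVars ρ.rhs))
      (ctxCC ρ.lhs.enc ρ.lhs.encRoot ρ.lhs.varHeads) where
  onV v := match v with
    | .inl (.inl (.inl x)) => .inl (.inl (Sum.inr ⟨x.1, ρ.var_cond x.2⟩))
    | .inl (.inl (.inr _)) => .inl (.inl ρ.lhs.encRoot)
    | .inl (.inr x') => .inl (.inr (mapPrime ρ x'))
    | .inr u => .inr u
  onE e := match e with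
    | .inl (.inl e) => e.elim
    | .inl (.inr (.inl x')) => .inl (.inr (.inl (mapPrime ρ x')))
    | .inl (.inr (.inr x')) => .inl (.inr (.inr (mapPrime ρ x')))
    | .inr b => .inr b
  src_comm := by
    rintro ((e | (⟨(x | u), hv⟩ | ⟨(x | u), hv⟩)) | b)
    · exact e.elim
    · rfl
    · exact absurd hv (by rintro ⟨y, hy⟩; cases hy)
    · rfl
    · exact absurd hv (by rintro ⟨y, hy⟩; cases hy)
    · rfl
  tgt_comm := by
    rintro ((e | (x' | x')) | b)
    · exact e.elim
    · rfl
    · rfl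
    · cases b <;> rfl
  lV_le := by
    rintro (((x | u) | x') | c)
    · refine Flat.le_cases (Or.inr ?_)
      exact (ctxCC_lV_inl ρ.lhs.enc ρ.lhs.encRoot ρ.lhs.varHeads
        (Sum.inr ⟨x.1, ρ.var_cond x.2⟩)).trans (if_pos ⟨⟨x.1, ρ.var_cond x.2⟩, rfl⟩)
    · refine Flat.le_cases (Or.inl ?_)
      exact (ctxCC_lV_inl (interfaceG ρ.rhs) (Sum.inr ()) (interfaceVars ρ.rhs)
        (Sum.inr u)).trans ((if_neg (by rintro ⟨y, hy⟩; cases hy)).trans rfl)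
    · exact Flat.le_cases (Or.inr rfl)
    · exact Flat.le_cases (Or.inr rfl)
  lE_le := by
    rintro ((e | (x' | x')) | b)
    · exact e.elim
    · exact Flat.le_cases (Or.inr rfl)
    · exact Flat.le_cases (Or.inr rfl)
    · exact Flat.le_cases (Or.inr rfl)

/-- The rule encoding `ρ°` of a term rewrite rule `ρ : l → r` as a PBPO⁺ rule. -/
noncomputable def ruleEnc (ρ : TRSRule S ar X) : PBPORule (FlatL S) where
  L := ρ.lhs.enc
  K := interfaceG ρ.rhs
  R := ρ.rhs.enc
  L' := ctxCC ρ.lhs.enc ρ.lhs.encRoot ρ.lhs.varHeads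
  K' := ctxCC (interfaceG ρ.rhs) (Sum.inr ()) (interfaceVars ρ.rhs)
  l := encKtoL ρ
  r := encKtoR ρ
  l' := encl' ρ
  tL := tCC ρ.lhs.enc ρ.lhs.encRoot ρ.lhs.varHeads
  tK := tCC (interfaceG ρ.rhs) (Sum.inr ()) (interfaceVars ρ.rhs)

/-- The rewrite relation of an encoded term rewriting system `R°`. -/
def SysStep (Rs : Set (TRSRule S ar X)) (G H : LGraph (FlatL S)) : Prop :=
  ∃ ρ ∈ Rs, PBPOStep (ruleEnc ρ) G H

end RuleEnc
section Cycles

variable {W : Type}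

/-- `IsUPath G u es v`: `es` is an undirected path from `u` to `v` in `G`. -/
def IsUPath (G : LGraph W) : G.V → List G.E → G.V → Prop
  | u, [], v => u = v
  | u, e :: es, v =>
      (G.src e = u ∧ IsUPath G (G.tgt e) es v) ∨ (G.tgt e = u ∧ IsUPath G (G.src e) es v)

/-- An undirected cycle at `v`: a nonempty undirected path from `v` to `v`
with pairwise distinct edges. -/
def IsUCycle (G : LGraph W) (v : G.V) (es : List G.E) : Prop :=
  es ≠ [] ∧ es.Nodup ∧ IsUPath G v es v

/-- A cycle edge is an edge lying on some undirected cycle. -/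
def CycleEdge (G : LGraph W) (e : G.E) : Prop :=
  ∃ v es, IsUCycle G v es ∧ e ∈ es

/-- A graph is cycle-free if it contains no undirected cycle. -/
def CycleFree (G : LGraph W) : Prop := ¬ ∃ v es, IsUCycle G v es

/-- `[G]`: the graph obtained from `G` by deleting all cycle edges. -/
def dropCycles (G : LGraph W) : LGraph W where
  V := G.V
  E := {e : G.E // ¬ CycleEdge G e}
  src e := G.src e.1
  tgt e := G.tgt e.1
  lV := G.lV
  lE e := G.lE e.1

end Cycles

section Zones

variable {S : Type}

/-- A vertex is in-well-formed if it has at most one incoming edge. -/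
def InWF (G : LGraph (FlatL S)) (v : G.V) : Prop :=
  ∀ e e' : G.E, G.tgt e = v → G.tgt e' = v → e = e'

/-- A vertex is out-well-formed if its label is a function symbol `f` and it
has exactly `ar f` outgoing edges, labeled `1, …, ar f`. -/
def OutWF (G : LGraph (FlatL S)) (ar : S → ℕ) (v : G.V) : Prop :=
  ∃ f : S, G.lV v = Flat.el (Sum.inl f) ∧
    ∃ φ : Fin (ar f) ≃ {e : G.E // G.src e = v},
      ∀ i, G.lE (φ i).1 = Flat.el (Sum.inr ⟨(i : ℕ) + 1, Nat.succ_pos _⟩)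

/-- A vertex is good if it is out-well-formed and all its children are
in-well-formed; otherwise it is bad. -/
def Good (G : LGraph (FlatL S)) (ar : S → ℕ) (v : G.V) : Prop :=
  OutWF G ar v ∧ ∀ e : G.E, G.src e = v → InWF G (G.tgt e)

/-- The edges included in a zone by the zoning algorithm are exactly the edges
with a good source. -/
def ZoneEdge (G : LGraph (FlatL S)) (ar : S → ℕ) (e : G.E) : Prop :=
  Good G ar (G.src e)

/-- One directed step along an edge included in a zone. -/
def ZStep (G : LGraph (FlatL S)) (ar : S → ℕ) (u v : G.V) : Prop :=
  ∃ e, ZoneEdge G ar e ∧ G.src e = u ∧ G.tgt e = v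

/-- Two vertices lie in the same zone iff they are connected by edges included
in zones (equivalence closure of `ZStep`). -/
def SameZone (G : LGraph (FlatL S)) (ar : S → ℕ) : G.V → G.V → Prop :=
  Relation.EqvGen (ZStep G ar)

/-- A root of a zone: a vertex with no parent inside its zone. -/
def IsZoneRoot (G : LGraph (FlatL S)) (ar : S → ℕ) (r : G.V) : Prop :=
  ¬ ∃ e, ZoneEdge G ar e ∧ G.tgt e = r

/-- A directed path along zone edges. -/
def IsZPath (G : LGraph (FlatL S)) (ar : S → ℕ) : G.V → List G.E → G.V → Prop
  | u, [], v => u = v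
  | u, e :: es, v => ZoneEdge G ar e ∧ G.src e = u ∧ IsZPath G ar (G.tgt e) es v

/-- The zone of `v₀`, as a subgraph of `G`, with every bad vertex relabeled
with `⊥`. -/
noncomputable def zoneTermGraph (G : LGraph (FlatL S)) (ar : S → ℕ) (v₀ : G.V) :
    LGraph (FlatL S) where
  V := {u : G.V // SameZone G ar u v₀}
  E := {e : G.E // ZoneEdge G ar e ∧ SameZone G ar (G.src e) v₀}
  src e := ⟨G.src e.1, e.2.2⟩
  tgt e := ⟨G.tgt e.1,
    Relation.EqvGen.trans _ _ _
      (Relation.EqvGen.symm _ _ (Relation.EqvGen.rel _ _ ⟨e.1, e.2.1, rfl, rfl⟩)) e.2.2⟩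
  lV u := if Good G ar u.1 then G.lV u.1 else Flat.bot
  lE e := G.lE e.1

end Zones

section Relabel

variable {W : Type}

/-- `G` with the label of vertex `v` changed to `l`. -/
noncomputable def relabelV (G : LGraph W) (v : G.V) (l : W) : LGraph W :=
  { G with lV := Function.update G.lV v l }

/-- `G` with the label of every vertex in `s` changed to `l`. -/
noncomputable def relabelSet (G : LGraph W) (s : Set G.V) (l : W) : LGraph W :=
  { G with lV := fun u => if u ∈ s then l else G.lV u }

end Relabel

/-! ### Auxiliary lemmas for statement_2 -/

section FlatAux

variable {A : Type}

theorem flat_el_le_el {a b : A} (h : (Flat.el a : Flat A) ≤ Flat.el b) : a = b := h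

theorem flat_el_le_bot_elim {a : A} (h : (Flat.el a : Flat A) ≤ Flat.bot) : False := h

end FlatAux

section TestGraphs

variable {A : Type}

/-- Single-vertex test graph. -/
def vTest (A : Type) : LGraph (Flat A) where
  V := Unit
  E := Empty
  src := Empty.elim
  tgt := Empty.elim
  lV := fun _ => Flat.bot
  lE := Empty.elim

/-- Morphism from the vertex test graph picking a vertex. -/
def vHom {H : LGraph (Flat A)} (v : H.V) : GLHom (vTest A) H where
  onV := fun _ => v
  onE := Empty.elim
  src_comm := fun e => e.elim
  tgt_comm := fun e => e.elim
  lV_le := fun _ => Flat.bot_le _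
  lE_le := fun e => e.elim

/-- Single-edge test graph. -/
def eTest (A : Type) : LGraph (Flat A) where
  V := Bool
  E := Unit
  src := fun _ => false
  tgt := fun _ => true
  lV := fun _ => Flat.bot
  lE := fun _ => Flat.bot

/-- Morphism from the edge test graph picking an edge. -/
def eHom {H : LGraph (Flat A)} (ε : H.E) : GLHom (eTest A) H where
  onV := fun b => match b with
    | true => H.tgt ε
    | false => H.src ε
  onE := fun _ => ε
  src_comm := fun _ => rfl
  tgt_comm := fun _ => rfl
  lV_le := fun _ => Flat.bot_le _
  lE_le := fun _ => Flat.bot_le _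

theorem mono_injV {L Gm : LGraph (Flat A)} {m : L ⟶ Gm} (hm : Mono m) :
    Function.Injective (homV m) := by
  intro v v' hvv
  have h1 : (vHom v : vTest A ⟶ L) ≫ m = (vHom v' : vTest A ⟶ L) ≫ m :=
    GLHom.ext' (funext fun _ => hvv) (funext fun e => e.elim)
  have h2 := hm.right_cancellation _ _ h1
  exact congrFun (congrArg GLHom.onV h2) ()

theorem mono_injE {L Gm : LGraph (Flat A)} {m : L ⟶ Gm} (hm : Mono m) :
    Function.Injective (homE m) := by
  intro e e' hee
  have h1 : (eHom e : eTest A ⟶ L) ≫ m = (eHom e' : eTest A ⟶ L) ≫ m := by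
    refine GLHom.ext' (funext fun b => ?_) (funext fun _ => hee)
    cases b
    · exact (m.src_comm e).symm.trans ((congrArg Gm.src hee).trans (m.src_comm e'))
    · exact (m.tgt_comm e).symm.trans ((congrArg Gm.tgt hee).trans (m.tgt_comm e'))
  have h2 := hm.right_cancellation _ _ h1
  exact congrFun (congrArg GLHom.onE h2) ()

theorem pb_vertex {L Gm L' : LGraph (Flat A)} {m : L ⟶ Gm} {tL : L ⟶ L'} {α : Gm ⟶ L'}
    (hpb : IsPullback (𝟙 L) m tL α) {v : Gm.V} {w : L.V}
    (h : homV α v = homV tL w) : homV m w = v := by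
  have comm : (vHom w : vTest A ⟶ L) ≫ tL = (vHom v : vTest A ⟶ Gm) ≫ α :=
    GLHom.ext' (funext fun _ => h.symm) (funext fun e => e.elim)
  have h1 := hpb.lift_fst _ _ comm
  have h2 := hpb.lift_snd _ _ comm
  rw [Category.comp_id] at h1
  rw [h1] at h2
  exact congrFun (congrArg GLHom.onV h2) ()

theorem pb_edge {L Gm L' : LGraph (Flat A)} {m : L ⟶ Gm} {tL : L ⟶ L'} {α : Gm ⟶ L'}
    (hpb : IsPullback (𝟙 L) m tL α) {e : Gm.E} {e' : L.E}
    (h : homE α e = homE tL e') : homE m e' = e := by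
  have comm : (eHom e' : eTest A ⟶ L) ≫ tL = (eHom e : eTest A ⟶ Gm) ≫ α := by
    refine GLHom.ext' (funext fun b => ?_) (funext fun _ => h.symm)
    cases b
    · exact (tL.src_comm e').symm.trans (((congrArg L'.src h).symm.trans (α.src_comm e)))
    · exact (tL.tgt_comm e').symm.trans (((congrArg L'.tgt h).symm.trans (α.tgt_comm e)))
  have h1 := hpb.lift_fst _ _ comm
  have h2 := hpb.lift_snd _ _ comm
  rw [Category.comp_id] at h1
  rw [h1] at h2
  exact congrFun (congrArg GLHom.onE h2) ()

theorem comp_onV {W' : Type} [Preorder W'] {G H K : LGraph W'} (f : G ⟶ H) (g : H ⟶ K)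
    (v : G.V) : homV (f ≫ g) v = homV g (homV f v) := rfl

theorem comp_onE {W' : Type} [Preorder W'] {G H K : LGraph W'} (f : G ⟶ H) (g : H ⟶ K)
    (e : G.E) : homE (f ≫ g) e = homE g (homE f e) := rfl

end TestGraphs

section TermAux

open Term

variable {S : Type} {ar : S → ℕ} {X : Type}

theorem sub?_nil_eq (t : Term S ar X) : t.sub? [] = some t := by cases t <;> rfl

theorem symAt_none_of_var {t : Term S ar X} {p : List ℕ} {x : X}
    (h : t.sub? p = some (.var x)) : t.symAt p = none := by
  unfold Term.symAt
  rw [h]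
  rfl

theorem encVertAt_unique {t : Term S ar X} {p : List ℕ} {v v' : t.encV}
    (hv : t.encVertAt p v) (hv' : t.encVertAt p v') : v = v' := by
  cases v with
  | inl q =>
    cases v' with
    | inl q' => exact congrArg Sum.inl (Subtype.ext (hv.trans hv'.symm))
    | inr x =>
      exfalso
      have h1 : t.symAt p = none := symAt_none_of_var hv'
      have h2 := q.2
      rw [show q.1 = p from hv, h1] at h2
      simp at h2
  | inr x =>
    cases v' with
    | inl q' =>
      exfalso
      have h1 : t.symAt p = none := symAt_none_of_var hv
      have h2 := q'.2
      rw [show q'.1 = p from hv', h1] at h2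
      simp at h2
    | inr x' =>
      have := hv.symm.trans hv'
      simp only [Option.some.injEq, Term.var.injEq] at this
      exact congrArg Sum.inr (Subtype.ext this)

theorem sub?_isSome_of_symAt {t : Term S ar X} {p : List ℕ} (h : (t.symAt p).isSome) :
    ∃ u, t.sub? p = some u := by
  unfold Term.symAt at h
  cases hs : t.sub? p with
  | none => rw [hs] at h; simp at h
  | some u => exact ⟨u, rfl⟩

theorem encVertAt_sub? {t : Term S ar X} {p : List ℕ} {v : t.encV}
    (hv : t.encVertAt p v) : ∃ u, t.sub? p = some u := by
  cases v with
  | inl q => exact sub?_isSome_of_symAt (show (t.symAt p).isSome from hv ▸ q.2)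
  | inr x => exact ⟨_, hv⟩

theorem symAt_isSome_of_sub?_cons {t : Term S ar X} {q : List ℕ} {j : ℕ} {rest : List ℕ}
    (h : ∃ u, t.sub? (q ++ j :: rest) = some u) : (t.symAt q).isSome := by
  obtain ⟨u, hu⟩ := h
  rw [Term.sub?_append] at hu
  cases hq : t.sub? q with
  | none => rw [hq] at hu; simp at hu
  | some s₀ =>
    rw [hq] at hu
    cases s₀ with
    | var y => simp [Term.sub?] at hu
    | app g ts => simp [Term.symAt, hq, Term.head?]

theorem edge_data {t : Term S ar X} {q : List ℕ} {i : ℕ}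
    (h : ∃ u, t.sub? (q ++ [i]) = some u) : ∃ f, t.symAt q = some f ∧ i < ar f := by
  obtain ⟨u, hu⟩ := h
  rw [Term.sub?_append] at hu
  cases hq : t.sub? q with
  | none => rw [hq] at hu; simp at hu
  | some s₀ =>
    rw [hq] at hu
    cases s₀ with
    | var y => simp [Term.sub?] at hu
    | app g ts =>
      refine ⟨g, by simp [Term.symAt, hq, Term.head?], ?_⟩
      by_cases hlt : i < ar g
      · exact hlt
      · simp only [Option.bind_some] at hu
        rw [show (Term.app g ts).sub? [i] = none by simp [Term.sub?, hlt]] at hu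
        simp at hu

theorem sub?_prefix {t : Term S ar X} {q d : List ℕ}
    (h : ∃ u, t.sub? (q ++ d) = some u) : ∃ u, t.sub? q = some u := by
  obtain ⟨u, hu⟩ := h
  rw [Term.sub?_append] at hu
  cases hq : t.sub? q with
  | none => rw [hq] at hu; simp at hu
  | some s₀ => exact ⟨s₀, rfl⟩

theorem encTgt_at (t : Term S ar X) (e : t.encE) :
    t.encVertAt (e.1.1 ++ [e.1.2]) (t.encTgt e) := by
  by_cases hh : (t.symAt (e.1.1 ++ [e.1.2])).isSome
  · have he : t.encTgt e = Sum.inl ⟨_, hh⟩ := dif_pos hh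
    rw [he]
    rfl
  · have he : t.encTgt e = Sum.inr ⟨Classical.choose (t.edge_tgt_var e.2 hh),
        ⟨e.1.1 ++ [e.1.2], Classical.choose_spec (t.edge_tgt_var e.2 hh)⟩⟩ := dif_neg hh
    rw [he]
    exact Classical.choose_spec (t.edge_tgt_var e.2 hh)

theorem encE_eq {t : Term S ar X} {e₁ e₂ : t.encE}
    (h1 : e₁.1.1 = e₂.1.1) (h2 : e₁.1.2 = e₂.1.2) : e₁ = e₂ :=
  Subtype.ext (Prod.ext h1 h2)

theorem enc_src_eq (t : Term S ar X) (e : t.encE) :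
    t.enc.src e = Sum.inl ⟨e.1.1, by obtain ⟨f, hf, _⟩ := e.2; simp [hf]⟩ := rfl

theorem root_symbol_of_not_var (l : Term S ar X) (hl : ∀ x, l ≠ .var x) :
    (l.symAt []).isSome := by
  cases l with
  | var x => exact absurd rfl (hl x)
  | app f ts => rfl

theorem encRoot_eq {t : Term S ar X} (h : (t.symAt []).isSome) :
    t.encRoot = Sum.inl ⟨[], h⟩ := by
  unfold Term.encRoot
  exact dif_pos h

/-- The position of a vertex of a term encoding. -/
noncomputable def posOfV (t : Term S ar X) : t.encV → List ℕ
  | .inl q => q.1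
  | .inr x => Classical.choose x.2

theorem posOfV_at (t : Term S ar X) (v : t.encV) : t.encVertAt (posOfV t v) v := by
  cases v with
  | inl q => rfl
  | inr x => exact Classical.choose_spec x.2

end TermAux

section MatchAux

open Term

variable {S : Type} {ar : S → ℕ} {X : Type}

theorem s_root_symbol (l s : Term S ar X) (hl : ∀ x, l ≠ .var x)
    (m : GLHom l.enc s.enc) : (s.symAt []).isSome := by
  by_cases hS : (s.symAt []).isSome
  · exact hS
  · exfalso
    obtain ⟨x, hx⟩ := s.root_var hS
    have hs_var : s = .var x := Option.some.inj ((sub?_nil_eq s).symm.trans hx)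
    subst hs_var
    have hrootL : (l.symAt []).isSome := root_symbol_of_not_var l hl
    obtain ⟨f, hf⟩ := Option.isSome_iff_exists.mp hrootL
    have hle := m.lV_le (Sum.inl ⟨[], hrootL⟩)
    rw [show l.enc.lV (Sum.inl ⟨[], hrootL⟩) = Flat.el (Sum.inl f) by
      show (l.symAt []).elim Flat.bot _ = _
      rw [hf]
      rfl] at hle
    cases hv : m.onV (Sum.inl ⟨[], hrootL⟩) with
    | inl q =>
      have h2 := q.2
      cases hq1 : q.1 with
      | nil => rw [hq1] at h2; simp [Term.symAt, Term.sub?, Term.head?] at h2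
      | cons a as => rw [hq1] at h2; simp [Term.symAt, Term.sub?] at h2
    | inr y =>
      rw [hv] at hle
      exact flat_el_le_bot_elim hle

theorem match_lab (l s : Term S ar X) (mm : GLHom l.enc s.enc) (e₀ : l.encE) :
    (mm.onE e₀).1.2 = e₀.1.2 := by
  have hle := mm.lE_le e₀
  have h1 := flat_el_le_el hle
  have h2 : e₀.1.2 + 1 = (mm.onE e₀).1.2 + 1 :=
    congrArg Subtype.val (Sum.inr.inj h1)
  omega

theorem match_unique (l s : Term S ar X) (hl : ∀ x, l ≠ .var x) (p : List ℕ)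
    (m m' : GLHom l.enc s.enc)
    (h : s.encVertAt p (m.onV l.encRoot)) (h' : s.encVertAt p (m'.onV l.encRoot)) :
    m = m' := by
  have edge_eq : ∀ e₀ : l.encE,
      m.onV (l.enc.src e₀) = m'.onV (l.enc.src e₀) → m.onE e₀ = m'.onE e₀ := by
    intro e₀ hsrc
    have hs1 : s.enc.src (m.onE e₀) = s.enc.src (m'.onE e₀) := by
      erw [m.src_comm, m'.src_comm, hsrc]
    have h1 : (m.onE e₀).1.1 = (m'.onE e₀).1.1 := by
      erw [enc_src_eq, enc_src_eq] at hs1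
      exact congrArg Subtype.val (Sum.inl.inj hs1)
    exact encE_eq h1 ((match_lab l s m e₀).trans (match_lab l s m' e₀).symm)
  have symv : ∀ q (hq : (l.symAt q).isSome),
      m.onV (Sum.inl ⟨q, hq⟩) = m'.onV (Sum.inl ⟨q, hq⟩) := by
    intro q
    induction q using List.reverseRecOn with
    | nil =>
      intro hq
      have e1 : (Sum.inl ⟨[], hq⟩ : l.encV) = l.encRoot := (encRoot_eq hq).symm
      rw [e1]
      exact encVertAt_unique h h'
    | append_singleton q i ih =>
      intro hq
      obtain ⟨f, hf, hlt⟩ := edge_data (t := l) (sub?_isSome_of_symAt hq)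
      have hq' : (l.symAt q).isSome := by rw [hf]; rfl
      have hE := edge_eq ⟨(q, i), f, hf, hlt⟩ (by
        erw [enc_src_eq]
        exact ih hq')
      have htgt : l.enc.tgt ⟨(q, i), f, hf, hlt⟩ = (Sum.inl ⟨q ++ [i], hq⟩ : l.encV) := by
        show l.encTgt _ = _
        unfold Term.encTgt
        exact dif_pos hq
      calc m.onV (Sum.inl ⟨q ++ [i], hq⟩)
          = s.enc.tgt (m.onE ⟨(q, i), f, hf, hlt⟩) := by erw [m.tgt_comm, htgt]
        _ = s.enc.tgt (m'.onE ⟨(q, i), f, hf, hlt⟩) := by rw [hE]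
        _ = m'.onV (Sum.inl ⟨q ++ [i], hq⟩) := by erw [m'.tgt_comm, htgt]
  have varv : ∀ x : {x : X // x ∈ l.vars},
      m.onV (Sum.inr x) = m'.onV (Sum.inr x) := by
    intro x
    obtain ⟨qx, hqx⟩ := x.2
    rcases List.eq_nil_or_concat qx with rfl | ⟨q, i, rfl⟩
    · exact absurd (Option.some.inj ((sub?_nil_eq l).symm.trans hqx)) (hl x.1)
    · rw [List.concat_eq_append] at hqx
      obtain ⟨f, hf, hlt⟩ := edge_data (t := l) ⟨_, hqx⟩
      have hq' : (l.symAt q).isSome := by rw [hf]; rfl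
      have hE := edge_eq ⟨(q, i), f, hf, hlt⟩ (by
        erw [enc_src_eq]
        exact symv q hq')
      have htgt : l.enc.tgt ⟨(q, i), f, hf, hlt⟩ = (Sum.inr x : l.encV) :=
        encVertAt_unique (encTgt_at l _) hqx
      calc m.onV (Sum.inr x)
          = s.enc.tgt (m.onE ⟨(q, i), f, hf, hlt⟩) := by erw [m.tgt_comm, htgt]
        _ = s.enc.tgt (m'.onE ⟨(q, i), f, hf, hlt⟩) := by rw [hE]
        _ = m'.onV (Sum.inr x) := by erw [m'.tgt_comm, htgt]
  refine GLHom.ext' (funext fun v => ?_) (funext fun e₀ => ?_)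
  · cases v with
    | inl q => exact symv q.1 q.2
    | inr x => exact varv x
  · exact edge_eq e₀ (by erw [enc_src_eq]; exact symv e₀.1.1 _)

end MatchAux

section CtxAux

open Term

theorem ctx_edge_unique {A : Type} {G : LGraph (Flat A)} {r : G.V} {Xs : Set G.V}
    {ε₁ ε₂ : (ctxCC G r Xs).E}
    (h1 : ∀ e, ε₁ ≠ Sum.inl (Sum.inl e)) (h2 : ∀ e, ε₂ ≠ Sum.inl (Sum.inl e))
    (hs : (ctxCC G r Xs).src ε₁ = (ctxCC G r Xs).src ε₂)
    (ht : (ctxCC G r Xs).tgt ε₁ = (ctxCC G r Xs).tgt ε₂) : ε₁ = ε₂ := by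
  rcases ε₁ with (e | (x | x)) | b
  · exact absurd rfl (h1 e)
  · rcases ε₂ with (e' | (y | y)) | b'
    · exact absurd rfl (h2 e')
    · have hs' : (Sum.inl (Sum.inl x.1) : (ctxCC G r Xs).V) = Sum.inl (Sum.inl y.1) := hs
      exact congrArg (fun z => Sum.inl (Sum.inr (Sum.inl z))) (Subtype.ext (Sum.inl.inj (Sum.inl.inj hs')))
    · have hs' : (Sum.inl (Sum.inl x.1) : (ctxCC G r Xs).V) = Sum.inl (Sum.inr y) := hs
      first
        | exact nomatch hs'
        | exact Sum.noConfusion (Sum.inl.inj hs')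
        | exact Sum.noConfusion (Sum.inl.inj (Sum.inl.inj hs'))
    · have hs' : (Sum.inl (Sum.inl x.1) : (ctxCC G r Xs).V) = Sum.inr () := hs
      first
        | exact nomatch hs'
        | exact Sum.noConfusion (Sum.inl.inj hs')
        | exact Sum.noConfusion (Sum.inl.inj (Sum.inl.inj hs'))
  · rcases ε₂ with (e' | (y | y)) | b'
    · exact absurd rfl (h2 e')
    · have hs' : (Sum.inl (Sum.inr x) : (ctxCC G r Xs).V) = Sum.inl (Sum.inl y.1) := hs
      first
        | exact nomatch hs'
        | exact Sum.noConfusion (Sum.inl.inj hs')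
        | exact Sum.noConfusion (Sum.inl.inj (Sum.inl.inj hs'))
    · have hs' : (Sum.inl (Sum.inr x) : (ctxCC G r Xs).V) = Sum.inl (Sum.inr y) := hs
      exact congrArg (fun z => Sum.inl (Sum.inr (Sum.inr z))) (Sum.inr.inj (Sum.inl.inj hs'))
    · have hs' : (Sum.inl (Sum.inr x) : (ctxCC G r Xs).V) = Sum.inr () := hs
      first
        | exact nomatch hs'
        | exact Sum.noConfusion (Sum.inl.inj hs')
        | exact Sum.noConfusion (Sum.inl.inj (Sum.inl.inj hs'))
  · rcases ε₂ with (e' | (y | y)) | b'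
    · exact absurd rfl (h2 e')
    · have hs'' : (Sum.inl (Sum.inl y.1) : (ctxCC G r Xs).V) = Sum.inr () := hs.symm
      first
        | exact nomatch hs''
        | exact Sum.noConfusion (Sum.inl.inj hs'')
        | exact Sum.noConfusion (Sum.inl.inj (Sum.inl.inj hs''))
    · have hs'' : (Sum.inl (Sum.inr y) : (ctxCC G r Xs).V) = Sum.inr () := hs.symm
      first
        | exact nomatch hs''
        | exact Sum.noConfusion (Sum.inl.inj hs'')
        | exact Sum.noConfusion (Sum.inl.inj (Sum.inl.inj hs''))
    · cases b <;> cases b'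
      · rfl
      · have ht' : (Sum.inr () : (ctxCC G r Xs).V) = Sum.inl (Sum.inl r) := ht
        first
        | exact nomatch ht'
        | exact Sum.noConfusion (Sum.inl.inj ht')
        | exact Sum.noConfusion (Sum.inl.inj (Sum.inl.inj ht'))
      · have ht' : (Sum.inl (Sum.inl r) : (ctxCC G r Xs).V) = Sum.inr () := ht
        first
        | exact nomatch ht'
        | exact Sum.noConfusion (Sum.inl.inj ht')
        | exact Sum.noConfusion (Sum.inl.inj (Sum.inl.inj ht'))
      · rfl

variable {S : Type} {ar : S → ℕ} {X : Type}

theorem chain_lemma (l s : Term S ar X) (hl : ∀ x, l ≠ .var x)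
    (m : l.enc ⟶ s.enc) (hmInj : Function.Injective (homV m))
    (β : s.enc ⟶ ctxCC l.enc l.encRoot l.varHeads)
    (hcm : m ≫ β = (tCC l.enc l.encRoot l.varHeads : l.enc ⟶ _))
    (hpb : IsPullback (𝟙 l.enc) m (tCC l.enc l.encRoot l.varHeads) β)
    (p : List ℕ) (hroot : s.encVertAt p (homV m l.encRoot)) :
    ∀ (q₂ q₁ : List ℕ) (hq : (s.symAt q₁).isSome), q₁ ++ q₂ = p → q₂ ≠ [] →
      homV β (Sum.inl ⟨q₁, hq⟩) = Sum.inr () := by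
  have hβm : ∀ w, homV β (homV m w) = Sum.inl (Sum.inl w) :=
    fun w => (comp_onV m β w).symm.trans (congrFun (congrArg GLHom.onV hcm) w)
  have hps : ∃ u, s.sub? p = some u := encVertAt_sub? hroot
  intro q₂
  induction q₂ with
  | nil => intro q₁ hq hqp hne; exact absurd rfl hne
  | cons i q₂' ih =>
    intro q₁ hq hqp hne
    have happ : (q₁ ++ [i]) ++ q₂' = p := by rw [← hqp]; simp
    have hsub : ∃ u, s.sub? (q₁ ++ [i]) = some u := sub?_prefix (happ ▸ hps)
    obtain ⟨f, hf, hlt⟩ := edge_data hsub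
    set e : s.encE := ⟨(q₁, i), f, hf, hlt⟩ with hedef
    cases q₂' with
    | nil =>
      -- base case: q₁ ++ [i] = p, the edge points at the match root
      have happ' : q₁ ++ [i] = p := by simpa using happ
      have htgtv : s.enc.tgt e = homV m l.encRoot :=
        encVertAt_unique (show s.encVertAt p (s.enc.tgt e) from happ' ▸ encTgt_at s e) hroot
      have hnotr : ∀ ε : l.encE, homE m ε ≠ e := by
        intro ε hEq
        have h1 : homV m (l.enc.tgt ε) = homV m l.encRoot :=
          (m.tgt_comm ε).symm.trans ((congrArg s.enc.tgt hEq).trans htgtv)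
        have h2 := hmInj h1
        have h3 := encTgt_at l ε
        rw [show l.encTgt ε = l.encRoot from h2,
          encRoot_eq (root_symbol_of_not_var l hl)] at h3
        have h4 : ([] : List ℕ) = ε.1.1 ++ [ε.1.2] := h3
        simp at h4
      have hne'' : ∀ ε, homE β e ≠ Sum.inl (Sum.inl ε) :=
        fun ε hc => hnotr ε (pb_edge hpb hc)
      have hsc : (ctxCC l.enc l.encRoot l.varHeads).src (homE β e) = homV β (s.enc.src e) :=
        β.src_comm e
      have htc : (ctxCC l.enc l.encRoot l.varHeads).tgt (homE β e) = homV β (s.enc.tgt e) :=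
        β.tgt_comm e
      rcases hε : homE β e with (ε | (x | x)) | b
      · exact absurd hε (hne'' ε)
      · erw [hε, htgtv, hβm] at htc
        have htc' : (Sum.inl (Sum.inr x) : (ctxCC l.enc l.encRoot l.varHeads).V)
            = Sum.inl (Sum.inl l.encRoot) := htc
        first
        | exact nomatch htc'
        | exact Sum.noConfusion (Sum.inl.inj htc')
        | exact Sum.noConfusion (Sum.inl.inj (Sum.inl.inj htc'))
      · erw [hε, htgtv, hβm] at htc
        have htc' : (Sum.inl (Sum.inr x) : (ctxCC l.enc l.encRoot l.varHeads).V)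
            = Sum.inl (Sum.inl l.encRoot) := htc
        first
        | exact nomatch htc'
        | exact Sum.noConfusion (Sum.inl.inj htc')
        | exact Sum.noConfusion (Sum.inl.inj (Sum.inl.inj htc'))
      · cases b
        · erw [hε, htgtv, hβm] at htc
          have htc' : (Sum.inr () : (ctxCC l.enc l.encRoot l.varHeads).V)
              = Sum.inl (Sum.inl l.encRoot) := htc
          first
        | exact nomatch htc'
        | exact Sum.noConfusion (Sum.inl.inj htc')
        | exact Sum.noConfusion (Sum.inl.inj (Sum.inl.inj htc'))
        · rw [hε] at hsc
          exact hsc.symm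
    | cons j rest =>
      have hq' : (s.symAt (q₁ ++ [i])).isSome :=
        symAt_isSome_of_sub?_cons (t := s) (by rw [happ]; exact hps)
      have hih := ih (q₁ ++ [i]) hq' happ (List.cons_ne_nil j rest)
      have htgt : s.enc.tgt e = Sum.inl ⟨q₁ ++ [i], hq'⟩ := by
        show s.encTgt _ = _
        unfold Term.encTgt
        exact dif_pos hq'
      have hβtgt : homV β (s.enc.tgt e) = Sum.inr () := by rw [htgt]; exact hih
      have hnotr : ∀ ε : l.encE, homE m ε ≠ e := by
        intro ε hEq
        have h2 : homV β (s.enc.tgt e) = Sum.inl (Sum.inl (l.enc.tgt ε)) :=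
          (congrArg (homV β) ((congrArg s.enc.tgt hEq).symm.trans (m.tgt_comm ε))).trans
            (hβm _)
        have := hβtgt.symm.trans h2
        first
        | exact nomatch this
        | exact Sum.noConfusion (Sum.inl.inj this)
        | exact Sum.noConfusion (Sum.inl.inj (Sum.inl.inj this))
      have hne'' : ∀ ε, homE β e ≠ Sum.inl (Sum.inl ε) :=
        fun ε hc => hnotr ε (pb_edge hpb hc)
      have hsc : (ctxCC l.enc l.encRoot l.varHeads).src (homE β e) = homV β (s.enc.src e) :=
        β.src_comm e
      have htc : (ctxCC l.enc l.encRoot l.varHeads).tgt (homE β e) = homV β (s.enc.tgt e) :=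
        β.tgt_comm e
      rcases hε : homE β e with (ε | (x | x)) | b
      · exact absurd hε (hne'' ε)
      · rw [hε, hβtgt] at htc
        have htc' : (Sum.inl (Sum.inr x) : (ctxCC l.enc l.encRoot l.varHeads).V)
            = Sum.inr () := htc
        first
        | exact nomatch htc'
        | exact Sum.noConfusion (Sum.inl.inj htc')
        | exact Sum.noConfusion (Sum.inl.inj (Sum.inl.inj htc'))
      · rw [hε, hβtgt] at htc
        have htc' : (Sum.inl (Sum.inr x) : (ctxCC l.enc l.encRoot l.varHeads).V)
            = Sum.inr () := htc
        first
        | exact nomatch htc'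
        | exact Sum.noConfusion (Sum.inl.inj htc')
        | exact Sum.noConfusion (Sum.inl.inj (Sum.inl.inj htc'))
      · cases b
        · rw [hε] at hsc
          exact hsc.symm
        · rw [hε, hβtgt] at htc
          have htc' : (Sum.inl (Sum.inl l.encRoot) : (ctxCC l.enc l.encRoot l.varHeads).V)
              = Sum.inr () := htc
          first
        | exact nomatch htc'
        | exact Sum.noConfusion (Sum.inl.inj htc')
        | exact Sum.noConfusion (Sum.inl.inj (Sum.inl.inj htc'))

theorem beta_step (l s : Term S ar X)
    (m : l.enc ⟶ s.enc)
    (β : s.enc ⟶ ctxCC l.enc l.encRoot l.varHeads)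
    (hcm : m ≫ β = (tCC l.enc l.encRoot l.varHeads : l.enc ⟶ _))
    (hpb : IsPullback (𝟙 l.enc) m (tCC l.enc l.encRoot l.varHeads) β)
    (e : s.encE) (hv : s.enc.tgt e ∉ Set.range (homV m)) :
    (∀ w₀ : {p : List ℕ // (l.symAt p).isSome},
        homV β (s.enc.src e) = Sum.inl (Sum.inl (Sum.inl w₀)) → False) ∧
    (∀ x₀ : {x : X // x ∈ l.vars},
        homV β (s.enc.src e) = Sum.inl (Sum.inl (Sum.inr x₀)) →
          homV β (s.enc.tgt e) = Sum.inl (Sum.inr ⟨Sum.inr x₀, x₀, rfl⟩)) ∧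
    (∀ x' : ↥l.varHeads,
        homV β (s.enc.src e) = Sum.inl (Sum.inr x') →
          homV β (s.enc.tgt e) = Sum.inl (Sum.inr x')) ∧
    (homV β (s.enc.src e) = Sum.inr () → homV β (s.enc.tgt e) = Sum.inr ()) := by
  have hnrE : ∀ ε, homE β e ≠ Sum.inl (Sum.inl ε) := by
    intro ε hc
    have h1 := pb_edge hpb hc
    exact hv ⟨l.enc.tgt ε, (m.tgt_comm ε).symm.trans (congrArg s.enc.tgt h1)⟩
  have hsc : (ctxCC l.enc l.encRoot l.varHeads).src (homE β e) = homV β (s.enc.src e) :=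
    β.src_comm e
  have htc : (ctxCC l.enc l.encRoot l.varHeads).tgt (homE β e) = homV β (s.enc.tgt e) :=
    β.tgt_comm e
  rcases hε : homE β e with (ε | (x | x)) | b
  · exact absurd hε (hnrE ε)
  · rw [hε] at hsc htc
    have hsc' : (Sum.inl (Sum.inl x.1) : (ctxCC l.enc l.encRoot l.varHeads).V)
        = homV β (s.enc.src e) := hsc
    have htc' : (Sum.inl (Sum.inr x) : (ctxCC l.enc l.encRoot l.varHeads).V)
        = homV β (s.enc.tgt e) := htc
    obtain ⟨y, hy⟩ := x.2
    refine ⟨?_, ?_, ?_, ?_⟩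
    · intro w₀ hsrc
      rw [hsrc, ← hy] at hsc'
      first
        | exact nomatch hsc'
        | exact Sum.noConfusion (Sum.inl.inj hsc')
        | exact Sum.noConfusion (Sum.inl.inj (Sum.inl.inj hsc'))
    · intro x₀ hsrc
      rw [hsrc] at hsc'
      have h7 : x.1 = Sum.inr x₀ := Sum.inl.inj (Sum.inl.inj hsc')
      have hx : x = ⟨Sum.inr x₀, x₀, rfl⟩ := Subtype.ext h7
      rw [← htc', hx]; rfl
    · intro x' hsrc
      rw [hsrc] at hsc'
      first
        | exact nomatch hsc'
        | exact Sum.noConfusion (Sum.inl.inj hsc')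
        | exact Sum.noConfusion (Sum.inl.inj (Sum.inl.inj hsc'))
    · intro hsrc
      rw [hsrc] at hsc'
      first
        | exact nomatch hsc'
        | exact Sum.noConfusion (Sum.inl.inj hsc')
        | exact Sum.noConfusion (Sum.inl.inj (Sum.inl.inj hsc'))
  · rw [hε] at hsc htc
    have hsc' : (Sum.inl (Sum.inr x) : (ctxCC l.enc l.encRoot l.varHeads).V)
        = homV β (s.enc.src e) := hsc
    have htc' : (Sum.inl (Sum.inr x) : (ctxCC l.enc l.encRoot l.varHeads).V)
        = homV β (s.enc.tgt e) := htc
    refine ⟨?_, ?_, ?_, ?_⟩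
    · intro w₀ hsrc
      rw [hsrc] at hsc'
      first
        | exact nomatch hsc'
        | exact Sum.noConfusion (Sum.inl.inj hsc')
        | exact Sum.noConfusion (Sum.inl.inj (Sum.inl.inj hsc'))
    · intro x₀ hsrc
      rw [hsrc] at hsc'
      first
        | exact nomatch hsc'
        | exact Sum.noConfusion (Sum.inl.inj hsc')
        | exact Sum.noConfusion (Sum.inl.inj (Sum.inl.inj hsc'))
    · intro x' hsrc
      rw [hsrc] at hsc'
      have h7 : x = x' := by
        have := Sum.inl.inj hsc'
        exact Sum.inr.inj this
      rw [← htc', h7]; rfl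
    · intro hsrc
      rw [hsrc] at hsc'
      first
        | exact nomatch hsc'
        | exact Sum.noConfusion (Sum.inl.inj hsc')
        | exact Sum.noConfusion (Sum.inl.inj (Sum.inl.inj hsc'))
  · rw [hε] at hsc htc
    have hsc' : (Sum.inr () : (ctxCC l.enc l.encRoot l.varHeads).V)
        = homV β (s.enc.src e) := hsc
    refine ⟨?_, ?_, ?_, ?_⟩
    · intro w₀ hsrc
      rw [hsrc] at hsc'
      first
        | exact nomatch hsc'
        | exact Sum.noConfusion (Sum.inl.inj hsc')
        | exact Sum.noConfusion (Sum.inl.inj (Sum.inl.inj hsc'))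
    · intro x₀ hsrc
      rw [hsrc] at hsc'
      first
        | exact nomatch hsc'
        | exact Sum.noConfusion (Sum.inl.inj hsc')
        | exact Sum.noConfusion (Sum.inl.inj (Sum.inl.inj hsc'))
    · intro x' hsrc
      rw [hsrc] at hsc'
      first
        | exact nomatch hsc'
        | exact Sum.noConfusion (Sum.inl.inj hsc')
        | exact Sum.noConfusion (Sum.inl.inj (Sum.inl.inj hsc'))
    · intro hsrc
      cases b
      · exact htc.symm
      · exact absurd ⟨l.encRoot, pb_vertex hpb htc.symm⟩ hv

end CtxAux




/-- Match determinism. If the rule encoding `ρ°` of a linear term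
rewrite rule is applied at position `p` in the term encoding `s°`, giving rise
to PBPO⁺ rewrite steps `s° ⇒ G` and `s° ⇒ G'` (both at position `p`), then
`G ≅ G'`. -/
theorem statement_2 {S : Type} {ar : S → ℕ} {X : Type}
    (ρ : TRSRule S ar X) (hρ : ρ.Linear) (s : Term S ar X) (hs : s.Linear)
    (p : List ℕ) (G G' : LGraph (FlatL S))
    (st : RewriteStep (ruleEnc ρ) s.enc G) (st' : RewriteStep (ruleEnc ρ) s.enc G')
    (h : s.encVertAt p (homV st.m ρ.lhs.encRoot))
    (h' : s.encVertAt p (homV st'.m ρ.lhs.encRoot)) :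
    Nonempty (G ≅ G') := by
  classical
  -- Step 1: the two matches agree.
  have hm : st.m = st'.m := match_unique ρ.lhs s ρ.lhs_not_var p st.m st'.m h h'
  have hmInj : Function.Injective (homV st.m) := mono_injV st.mono_m
  -- Commutation and pullback facts for both adherence morphisms.
  have hcm : st.m ≫ st.α = (tCC ρ.lhs.enc ρ.lhs.encRoot ρ.lhs.varHeads : ρ.lhs.enc ⟶ _) :=
    ((Category.id_comp ((ruleEnc ρ).tL)).symm.trans st.matchPB.w).symm
  have hpb : IsPullback (𝟙 ρ.lhs.enc) st.m
      (tCC ρ.lhs.enc ρ.lhs.encRoot ρ.lhs.varHeads : ρ.lhs.enc ⟶ _) st.α := st.matchPB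
  have matchPB2 := st'.matchPB
  rw [← hm] at matchPB2
  have hcm' : st.m ≫ st'.α = (tCC ρ.lhs.enc ρ.lhs.encRoot ρ.lhs.varHeads : ρ.lhs.enc ⟶ _) :=
    ((Category.id_comp ((ruleEnc ρ).tL)).symm.trans matchPB2.w).symm
  have hpb' : IsPullback (𝟙 ρ.lhs.enc) st.m
      (tCC ρ.lhs.enc ρ.lhs.encRoot ρ.lhs.varHeads : ρ.lhs.enc ⟶ _) st'.α := matchPB2
  -- Step 2: the two adherence morphisms agree.
  have hS : (s.symAt []).isSome := s_root_symbol ρ.lhs s ρ.lhs_not_var st.m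
  have chainα := chain_lemma ρ.lhs s ρ.lhs_not_var st.m hmInj st.α hcm hpb p h
  have chainα' := chain_lemma ρ.lhs s ρ.lhs_not_var st.m hmInj st'.α hcm' hpb' p h
  have hβm : ∀ w, homV st.α (homV st.m w) = Sum.inl (Sum.inl w) :=
    fun w => (comp_onV st.m st.α w).symm.trans (congrFun (congrArg GLHom.onV hcm) w)
  have hβm' : ∀ w, homV st'.α (homV st.m w) = Sum.inl (Sum.inl w) :=
    fun w => (comp_onV st.m st'.α w).symm.trans (congrFun (congrArg GLHom.onV hcm') w)
  have hveq : ∀ v : s.encV, homV st.α v = homV st'.α v := by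
    have key : ∀ n (v : s.encV), (posOfV s v).length = n →
        homV st.α v = homV st'.α v := by
      intro n
      induction n using Nat.strong_induction_on with
      | _ n ih =>
        intro v hn
        by_cases hvr : v ∈ Set.range (homV st.m)
        · obtain ⟨w0, rfl⟩ := hvr
          rw [hβm w0, hβm' w0]
        · rcases List.eq_nil_or_concat (posOfV s v) with hnil | ⟨q, i, hcon⟩
          · -- `v` is the root of `s.enc` and lies outside the image of the match
            have hv0 : s.encVertAt [] v := hnil ▸ posOfV_at s v
            have hveq0 : v = Sum.inl ⟨[], hS⟩ := encVertAt_unique hv0 rfl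
            have hpne : p ≠ [] := by
              intro hp0
              exact hvr ⟨ρ.lhs.encRoot,
                encVertAt_unique h (show s.encVertAt p v by rw [hp0]; exact hv0)⟩
            subst hveq0
            rw [chainα p [] hS (by simp) hpne, chainα' p [] hS (by simp) hpne]
          · -- `v` has a parent edge
            rw [List.concat_eq_append] at hcon
            have hvat : s.encVertAt (q ++ [i]) v := hcon ▸ posOfV_at s v
            obtain ⟨f, hf, hlt⟩ := edge_data (encVertAt_sub? hvat)
            set e : s.encE := ⟨(q, i), f, hf, hlt⟩ with hedef
            have htgt : s.enc.tgt e = v := encVertAt_unique (encTgt_at s e) hvat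
            have hqS : (s.symAt q).isSome := by rw [hf]; rfl
            have hsrcv : s.enc.src e = Sum.inl ⟨q, hqS⟩ := rfl
            have hlen : q.length < n := by
              have : n = q.length + 1 := by rw [← hn, hcon]; simp
              omega
            have hsagree : homV st.α (s.enc.src e) = homV st'.α (s.enc.src e) := by
              rw [hsrcv]
              exact ih q.length hlen _ rfl
            have hvnot : s.enc.tgt e ∉ Set.range (homV st.m) := by
              rw [htgt]; exact hvr
            have bs := beta_step ρ.lhs s st.m st.α hcm hpb e hvnot
            have bs' := beta_step ρ.lhs s st.m st'.α hcm' hpb' e hvnot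
            rw [← htgt]
            rcases hc : homV st.α (s.enc.src e) with ((w₀ | x₀) | x') | u
            · exact ((bs.1 w₀ hc).elim)
            · rw [bs.2.1 x₀ hc, bs'.2.1 x₀ (hsagree ▸ hc)]
            · rw [bs.2.2.1 x' hc, bs'.2.2.1 x' (hsagree ▸ hc)]
            · cases u
              rw [bs.2.2.2 hc, bs'.2.2.2 (hsagree ▸ hc)]
    exact fun v => key (posOfV s v).length v rfl
  have heeq : ∀ e : s.encE, homE st.α e = homE st'.α e := by
    intro e
    by_cases her : e ∈ Set.range (homE st.m)
    · obtain ⟨ε, rfl⟩ := her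
      have h1 : homE st.α (homE st.m ε) = Sum.inl (Sum.inl ε) :=
        (comp_onE st.m st.α ε).symm.trans (congrFun (congrArg GLHom.onE hcm) ε)
      have h2 : homE st'.α (homE st.m ε) = Sum.inl (Sum.inl ε) :=
        (comp_onE st.m st'.α ε).symm.trans (congrFun (congrArg GLHom.onE hcm') ε)
      rw [h1, h2]
    · have hn1 : ∀ ε, homE st.α e ≠ Sum.inl (Sum.inl ε) :=
        fun ε hc => her ⟨ε, pb_edge hpb hc⟩
      have hn2 : ∀ ε, homE st'.α e ≠ Sum.inl (Sum.inl ε) :=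
        fun ε hc => her ⟨ε, pb_edge hpb' hc⟩
      exact ctx_edge_unique hn1 hn2
        ((st.α.src_comm e).trans ((hveq _).trans (st'.α.src_comm e).symm))
        ((st.α.tgt_comm e).trans ((hveq _).trans (st'.α.tgt_comm e).symm))
  have hα : st.α = st'.α := GLHom.ext' (funext hveq) (funext heeq)
  -- Step 3: transport the pullback and pushout.
  have pbK2 := st'.pbK
  rw [← hα] at pbK2
  obtain ⟨φ, hfst, hsnd⟩ : ∃ φ : st.GK ≅ st'.GK,
      φ.hom ≫ st'.gL = st.gL ∧ φ.hom ≫ st'.u' = st.u' :=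
    ⟨st.pbK.isoIsPullback _ _ pbK2, st.pbK.isoIsPullback_hom_fst _ _ pbK2,
      st.pbK.isoIsPullback_hom_snd _ _ pbK2⟩
  have hu : st.u ≫ φ.hom = st'.u := by
    apply pbK2.hom_ext
    · rw [Category.assoc, hfst, st.u_gL, hm, st'.u_gL]
    · rw [Category.assoc, hsnd, st.u_u', st'.u_u']
  have hw1 : (ruleEnc ρ).r ≫ st'.w = st.u ≫ (φ.hom ≫ st'.gR) := by
    rw [← Category.assoc, hu]
    exact st'.po.w
  have hw2 : (ruleEnc ρ).r ≫ st.w = st'.u ≫ (φ.inv ≫ st.gR) := by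
    rw [← hu, Category.assoc, Iso.hom_inv_id_assoc]
    exact st.po.w
  exact ⟨{
    hom := st.po.desc st'.w (φ.hom ≫ st'.gR) hw1
    inv := st'.po.desc st.w (φ.inv ≫ st.gR) hw2
    hom_inv_id := by
      apply st.po.hom_ext
      · rw [← Category.assoc, st.po.inl_desc, st'.po.inl_desc, Category.comp_id]
      · rw [← Category.assoc, st.po.inr_desc, Category.assoc, st'.po.inr_desc,
          Iso.hom_inv_id_assoc, Category.comp_id]
    inv_hom_id := by
      apply st'.po.hom_ext
      · rw [← Category.assoc, st'.po.inl_desc, st.po.inl_desc, Category.comp_id]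
      · rw [← Category.assoc, st'.po.inr_desc, Category.assoc, st.po.inr_desc,
          Iso.inv_hom_id_assoc, Category.comp_id] }⟩
end
end

section
/- Let ρ = l → r be a linear term rewrite rule and let m : l° ↣ G be a match morphism establishing a PBPO+ rewrite step via the rule encoding ρ° on a finite Σ°-labeled graph G. Then m maps every symbol vertex of l° (i.e., every vertex labeled with a symbol from Σ) to a good vertex of G. -/
open CategoryTheory
open Classical

noncomputable section

/-! ### Auxiliary lemmas for Statement 16 -/

theorem Flat.le_antisymm' {A : Type} {a b : Flat A} (h : a ≤ b) (h' : b ≤ a) : a = b := by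
  have h1 : Flat.le a b := h
  have h2 : Flat.le b a := h'
  cases a <;> cases b <;> simp_all [Flat.le]

/-- Any edge of `G` that `α` maps into the image of `tL` is in the image of `m`
(consequence of the match square being a pullback). -/
theorem factor_edge {A : Type} {L L' G : LGraph (Flat A)} {m : L ⟶ G} {tL : L ⟶ L'}
    {α : G ⟶ L'} (pb : IsPullback (𝟙 L) m tL α)
    (e1 : G.E) (e' : L.E) (h : homE α e1 = homE tL e') : homE m e' = e1 := by
  let T : LGraph (Flat A) :=
    { V := Bool, E := Unit, src := fun _ => false, tgt := fun _ => true,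
      lV := fun _ => Flat.bot, lE := fun _ => Flat.bot }
  let a : T ⟶ L :=
    { onV := fun x => match x with | false => L.src e' | true => L.tgt e'
      onE := fun _ => e'
      src_comm := fun _ => rfl, tgt_comm := fun _ => rfl,
      lV_le := fun _ => Flat.bot_le _, lE_le := fun _ => Flat.bot_le _ }
  let b : T ⟶ G :=
    { onV := fun x => match x with | false => G.src e1 | true => G.tgt e1
      onE := fun _ => e1
      src_comm := fun _ => rfl, tgt_comm := fun _ => rfl,
      lV_le := fun _ => Flat.bot_le _, lE_le := fun _ => Flat.bot_le _ }
  have h' : α.onE e1 = tL.onE e' := h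
  have comm : a ≫ tL = b ≫ α := by
    apply GLHom.ext'
    · funext x
      cases x
      · show tL.onV (L.src e') = α.onV (G.src e1)
        rw [← tL.src_comm, ← α.src_comm, h']
      · show tL.onV (L.tgt e') = α.onV (G.tgt e1)
        rw [← tL.tgt_comm, ← α.tgt_comm, h']
    · funext _
      show tL.onE e' = α.onE e1
      rw [h']
  have h1 := pb.lift_fst a b comm
  have h2 := pb.lift_snd a b comm
  rw [Category.comp_id] at h1
  rw [h1] at h2
  exact congrFun (congrArg GLHom.onE h2) ()

theorem append_singleton_inj {p p' : List ℕ} {i i' : ℕ} (h : p ++ [i] = p' ++ [i']) :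
    p = p' ∧ i = i' := by
  have := List.append_inj' h rfl
  exact ⟨this.1, by simpa using this.2⟩

/-- The target map of the encoding of a linear term is injective. -/
theorem encTgt_inj {S : Type} {ar : S → ℕ} {X : Type} {t : Term S ar X}
    (hlin : t.Linear) : Function.Injective t.encTgt := by
  intro d d' h
  unfold Term.encTgt Term.encV at h
  split at h <;> split at h
  · rw [Sum.inl.injEq, Subtype.mk.injEq] at h
    obtain ⟨h1, h2⟩ := append_singleton_inj h
    exact Subtype.ext (Prod.ext h1 h2)
  · exact absurd h (by simp)
  · exact absurd h (by simp)
  · rename_i hn hn'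
    rw [Sum.inr.injEq] at h
    injection h with h
    have s1 := Classical.choose_spec (t.edge_tgt_var d.2 hn)
    have s2 := Classical.choose_spec (t.edge_tgt_var d'.2 hn')
    rw [h] at s1
    have := hlin _ _ _ s1 s2
    obtain ⟨h1, h2⟩ := append_singleton_inj this
    exact Subtype.ext (Prod.ext h1 h2)

theorem lhs_symAt_root {S : Type} {ar : S → ℕ} {X : Type} (ρ : TRSRule S ar X) :
    (ρ.lhs.symAt []).isSome := by
  rcases hl : ρ.lhs with x | ⟨f, ts⟩
  · exact absurd hl (ρ.lhs_not_var x)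
  · simp [Term.symAt, Term.sub?, Term.head?]

theorem encTgt_ne_root {S : Type} {ar : S → ℕ} {X : Type} {t : Term S ar X}
    (h : (t.symAt []).isSome) (d : t.encE) : t.encTgt d ≠ t.encRoot := by
  unfold Term.encTgt Term.encRoot Term.encV
  rw [dif_pos h]
  split
  · intro hc
    rw [Sum.inl.injEq, Subtype.mk.injEq] at hc
    simp at hc
  · exact fun hc => nomatch hc

/-- A match morphism `m : l° ↣ G` establishing a PBPO⁺ rewrite
step via the rule encoding `ρ°` of a linear term rewrite rule `ρ = l → r` on a
finite `Σ°`-labeled graph `G` maps every symbol vertex of `l°` to a good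
vertex of `G`. -/
theorem statement_16 {S : Type} {ar : S → ℕ} {X : Type}
    (ρ : TRSRule S ar X) (hρ : ρ.Linear) (G H : LGraph (FlatL S))
    (hfin : FiniteG G) (st : RewriteStep (ruleEnc ρ) G H)
    (q : {p : List ℕ // (ρ.lhs.symAt p).isSome}) :
    Good G ar (homV st.m (Sum.inl q)) := by
  classical
  obtain ⟨f, hf⟩ := Option.isSome_iff_exists.mp q.2
  -- the match square commutes: tL = m ≫ α
  have hw : (ruleEnc ρ).tL = st.m ≫ st.α := by
    have h := st.matchPB.w
    rwa [Category.id_comp] at h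
  have hαV : ∀ x : ρ.lhs.enc.V,
      st.α.onV (st.m.onV x) = Sum.inl (Sum.inl x) :=
    fun x => (congrFun (congrArg GLHom.onV hw) x).symm
  have hαE : ∀ x : ρ.lhs.enc.E,
      st.α.onE (st.m.onE x) = Sum.inl (Sum.inl x) :=
    fun x => (congrFun (congrArg GLHom.onE hw) x).symm
  -- the edges of l° out of the symbol vertex q
  let eL : Fin (ar f) → ρ.lhs.enc.E := fun i => ⟨(q.1, i.1), ⟨f, hf, i.2⟩⟩
  have hsrcL : ∀ i, (ruleEnc ρ).L.src (eL i) = Sum.inl q := by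
    intro i
    apply congrArg Sum.inl
    apply Subtype.ext
    rfl
  have hsrc : ∀ i, G.src (st.m.onE (eL i)) = st.m.onV (Sum.inl q) := by
    intro i
    exact (st.m.src_comm (eL i)).trans (congrArg _ (hsrcL i))
  -- vertex label of the image of q is exactly f
  have hLv : ρ.lhs.enc.lV (Sum.inl q) = Flat.el (Sum.inl f) := by
    simp [Term.enc, hf]
  have hLv' : (ruleEnc ρ).L.lV (Sum.inl q) = Flat.el (Sum.inl f) := hLv
  have hvl : G.lV (st.m.onV (Sum.inl q)) = Flat.el (Sum.inl f) := by
    have le1 := st.m.lV_le (Sum.inl q)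
    rw [hLv'] at le1
    have le2 := st.α.lV_le (st.m.onV (Sum.inl q))
    rw [hαV (Sum.inl q)] at le2
    have hL'v : (ruleEnc ρ).L'.lV (Sum.inl (Sum.inl (Sum.inl q))) = Flat.el (Sum.inl f) := by
      show (ctxCC ρ.lhs.enc ρ.lhs.encRoot ρ.lhs.varHeads).lV (Sum.inl (Sum.inl (Sum.inl q))) = _
      exact (ctxCC_lV_inl ρ.lhs.enc ρ.lhs.encRoot ρ.lhs.varHeads (Sum.inl q)).trans ((if_neg (by rintro ⟨y, hy⟩; cases hy)).trans hLv)
    replace le2 := le2.trans_eq hL'v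
    exact Flat.le_antisymm' le2 le1
  -- edge labels of images of the eL i are exact
  have hlab : ∀ i : Fin (ar f),
      G.lE (st.m.onE (eL i)) = Flat.el (Sum.inr ⟨i.1 + 1, Nat.succ_pos _⟩) := by
    intro i
    have le1 : Flat.el (Sum.inr ⟨i.1 + 1, Nat.succ_pos _⟩) ≤ G.lE (st.m.onE (eL i)) :=
      st.m.lE_le (eL i)
    have le2 : G.lE (st.m.onE (eL i)) ≤ Flat.el (Sum.inr ⟨i.1 + 1, Nat.succ_pos _⟩) := by
      have h := st.α.lE_le (st.m.onE (eL i))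
      rwa [hαE (eL i)] at h
    exact Flat.le_antisymm' le2 le1
  -- every edge of G out of the image of q is the image of some eL i
  have hsurj : ∀ e1 : G.E, G.src e1 = st.m.onV (Sum.inl q) →
      ∃ i : Fin (ar f), st.m.onE (eL i) = e1 := by
    intro e1 he1
    have hs : (ruleEnc ρ).L'.src (st.α.onE e1) = Sum.inl (Sum.inl (Sum.inl q)) := by
      rw [st.α.src_comm, he1]
      exact hαV _
    rcases hd : st.α.onE e1 with (d | (x | x)) | b
    · rw [hd] at hs
      have h1 : (Sum.inl (Sum.inl (ρ.lhs.enc.src d)) : (ruleEnc ρ).L'.V)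
          = Sum.inl (Sum.inl (Sum.inl q)) := hs
      injection h1 with h2
      injection h2 with h3
      have hq1 : d.1.1 = q.1 :=
        congrArg (fun z : ρ.lhs.encV =>
          match z with | .inl p => p.1 | .inr _ => d.1.1) h3
      obtain ⟨f', hf', hlt⟩ := d.2
      rw [hq1] at hf'
      rw [hf] at hf'
      have hff : f' = f := (Option.some.inj hf').symm
      subst hff
      refine ⟨⟨d.1.2, hlt⟩, factor_edge st.matchPB e1 (eL ⟨d.1.2, hlt⟩) ?_⟩
      have hde : d = eL ⟨d.1.2, hlt⟩ := Subtype.ext (Prod.ext hq1 rfl)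
      show st.α.onE e1 = Sum.inl (Sum.inl (eL ⟨d.1.2, hlt⟩))
      rw [hd]
      exact congrArg Sum.inl (congrArg Sum.inl hde)
    · rw [hd] at hs
      have h1 : (Sum.inl (Sum.inl x.1) : (ruleEnc ρ).L'.V)
          = Sum.inl (Sum.inl (Sum.inl q)) := hs
      injection h1 with h2
      injection h2 with h3
      obtain ⟨y, hy⟩ := x.2
      rw [← hy] at h3
      exact nomatch h3
    · rw [hd] at hs
      have h1 : (Sum.inl (Sum.inr x) : (ruleEnc ρ).L'.V)
          = Sum.inl (Sum.inl (Sum.inl q)) := hs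
      injection h1 with h2
      exact nomatch h2
    · rw [hd] at hs
      exact nomatch
        (show (Sum.inr () : (ruleEnc ρ).L'.V) = Sum.inl (Sum.inl (Sum.inl q)) from hs)
  -- the map i ↦ m(eL i) is injective
  have hinj : ∀ i j : Fin (ar f), st.m.onE (eL i) = st.m.onE (eL j) → i = j := by
    intro i j hij
    have h1 := congrArg st.α.onE hij
    rw [hαE (eL i), hαE (eL j)] at h1
    injection h1 with h2
    injection h2 with h3
    exact Fin.ext (congrArg (fun e : ρ.lhs.enc.E => e.1.2) h3)
  constructor
  · -- OutWF
    refine ⟨f, hvl, Equiv.ofBijective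
      (fun i => ⟨st.m.onE (eL i), hsrc i⟩) ⟨?_, ?_⟩, ?_⟩
    · intro i j hij
      exact hinj i j (congrArg Subtype.val hij)
    · rintro ⟨e1, he1⟩
      obtain ⟨i, hi⟩ := hsurj e1 he1
      exact ⟨i, Subtype.ext hi⟩
    · intro i
      exact hlab i
  · -- all children are in-well-formed
    intro e he
    obtain ⟨i, hei⟩ := hsurj e he
    have htgt : G.tgt e = st.m.onV ((ruleEnc ρ).L.tgt (eL i)) := by
      rw [← hei]
      exact st.m.tgt_comm (eL i)
    intro e1 e2 h1 h2
    suffices hkey : ∀ e' : G.E, G.tgt e' = G.tgt e → e' = st.m.onE (eL i) by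
      rw [hkey e1 h1, hkey e2 h2]
    intro e' he'
    have ht : (ruleEnc ρ).L'.tgt (st.α.onE e')
        = Sum.inl (Sum.inl ((ruleEnc ρ).L.tgt (eL i))) := by
      rw [st.α.tgt_comm, he', htgt]
      exact hαV _
    rcases hd : st.α.onE e' with (d | (x | x)) | b
    · rw [hd] at ht
      have hh1 : (Sum.inl (Sum.inl ((ruleEnc ρ).L.tgt d)) : (ruleEnc ρ).L'.V)
          = Sum.inl (Sum.inl ((ruleEnc ρ).L.tgt (eL i))) := ht
      injection hh1 with hh2
      injection hh2 with hh3
      have h4 : d = eL i := encTgt_inj hρ.1 hh3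
      exact (factor_edge st.matchPB e' (eL i)
        (by show st.α.onE e' = Sum.inl (Sum.inl (eL i)); rw [hd, h4]; rfl)).symm
    · rw [hd] at ht
      have hh1 : (Sum.inl (Sum.inr x) : (ruleEnc ρ).L'.V)
          = Sum.inl (Sum.inl ((ruleEnc ρ).L.tgt (eL i))) := ht
      injection hh1 with hh2
      exact nomatch hh2
    · rw [hd] at ht
      have hh1 : (Sum.inl (Sum.inr x) : (ruleEnc ρ).L'.V)
          = Sum.inl (Sum.inl ((ruleEnc ρ).L.tgt (eL i))) := ht
      injection hh1 with hh2
      exact nomatch hh2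
    · rw [hd] at ht
      cases b
      · exact nomatch
          (show (Sum.inr () : (ruleEnc ρ).L'.V)
            = Sum.inl (Sum.inl ((ruleEnc ρ).L.tgt (eL i))) from ht)
      · have hh1 : (Sum.inl (Sum.inl ρ.lhs.encRoot) : (ruleEnc ρ).L'.V)
            = Sum.inl (Sum.inl ((ruleEnc ρ).L.tgt (eL i))) := ht
        injection hh1 with hh2
        injection hh2 with hh3
        exact absurd hh3.symm (encTgt_ne_root (lhs_symAt_root ρ) (eL i))
end
end
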